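/- arXiv:1202.0779 — 7 statements merged into one kernel-verified Lean document; each statement's English description precedes it below -/
import Mathlib

section
/- Let f : ℝ^N → ℝ^N be a continuous injective map with f(0)=0, and let p ∈ ℝ^N. If ‖f^{2n}(p)‖ → ∞ as n → ∞, then ‖f^{n}(p)‖ → ∞ as n → ∞. -/
set_option maxHeartbeats 1000000


/-- If `‖f^[2n] p‖ → ∞`, then `‖f^[n] p‖ → ∞`, for a continuous injective
`f : ℝ^N → ℝ^N` with `f 0 = 0`. -/
theorem stmt_1 (N : ℕ) (f : EuclideanSpace ℝ (Fin N) → EuclideanSpace ℝ (Fin N))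
    (hcont : Continuous f) (hinj : Function.Injective f) (h0 : f 0 = 0)
    (p : EuclideanSpace ℝ (Fin N))
    (h : Filter.Tendsto (fun n => ‖f^[2 * n] p‖) Filter.atTop Filter.atTop) :
    Filter.Tendsto (fun n => ‖f^[n] p‖) Filter.atTop Filter.atTop := by
  -- First show odd iterates also tend to infinity.
  have hodd : Filter.Tendsto (fun n => ‖f^[2 * n + 1] p‖) Filter.atTop Filter.atTop := by
    by_contra hn
    obtain ⟨b, hb⟩ : ∃ b, ∃ᶠ n in Filter.atTop, ‖f^[2 * n + 1] p‖ < b := by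
      by_contra hc
      push_neg at hc
      apply hn
      rw [Filter.tendsto_atTop]
      intro b
      have := hc b
      exact this
    obtain ⟨φ, hφmono, hφ⟩ := Filter.extraction_of_frequently_atTop hb
    have hmem : ∀ k, f^[2 * φ k + 1] p ∈ Metric.closedBall (0 : EuclideanSpace ℝ (Fin N)) b := by
      intro k
      simpa [Metric.mem_closedBall, dist_zero_right] using (hφ k).le
    obtain ⟨q, _, ψ, hψmono, hψ⟩ :=
      (isCompact_closedBall (0 : EuclideanSpace ℝ (Fin N)) b).tendsto_subseq hmem
    have h1 : Filter.Tendsto (fun k => ‖f (f^[2 * φ (ψ k) + 1] p)‖)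
        Filter.atTop (nhds ‖f q‖) :=
      ((hcont.continuousAt.tendsto).comp hψ).norm
    have hidx : Filter.Tendsto (fun k => φ (ψ k) + 1) Filter.atTop Filter.atTop :=
      Filter.tendsto_atTop_mono (fun k => Nat.le_succ_of_le ((hφmono.comp hψmono).id_le k))
        Filter.tendsto_id
    have h2 : Filter.Tendsto (fun k => ‖f^[2 * (φ (ψ k) + 1)] p‖) Filter.atTop Filter.atTop :=
      h.comp hidx
    have heq : (fun k => ‖f^[2 * (φ (ψ k) + 1)] p‖)
        = fun k => ‖f (f^[2 * φ (ψ k) + 1] p)‖ := by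
      funext k
      rw [show 2 * (φ (ψ k) + 1) = (2 * φ (ψ k) + 1) + 1 by ring,
        Function.iterate_succ_apply']
    rw [heq] at h2
    exact not_tendsto_atTop_of_tendsto_nhds h1 h2
  -- Combine even and odd.
  rw [Filter.tendsto_atTop] at h hodd ⊢
  intro b
  obtain ⟨N1, h1⟩ := Filter.eventually_atTop.mp (h b)
  obtain ⟨N2, h2⟩ := Filter.eventually_atTop.mp (hodd b)
  rw [Filter.eventually_atTop]
  refine ⟨2 * N1 + 2 * N2 + 1, fun n hn => ?_⟩
  rcases Nat.even_or_odd n with ⟨m, hm⟩ | ⟨m, hm⟩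
  · have : n = 2 * m := by omega
    rw [this]
    exact h1 m (by omega)
  · rw [hm]
    exact h2 m (by omega)
end

section
/- Let g : [0,1) → [0,1) be continuous and injective with Fix(g) = {0}. If 0 is a local attractor for g (there is a neighbourhood of 0 all of whose points have orbits converging to 0), then 0 is a global attractor: for every x ∈ [0,1), gⁿ(x) → 0 as n → ∞. -/
/-- A continuous injective map of `[0,1)` whose only fixed point `0` is a local
attractor has `0` as a global attractor. -/
theorem stmt_2 (g : Set.Ico (0:ℝ) 1 → Set.Ico (0:ℝ) 1)
    (hcont : Continuous g) (hinj : Function.Injective g)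
    (z : Set.Ico (0:ℝ) 1) (hz : (z : ℝ) = 0)
    (hfix : ∀ x, g x = x ↔ x = z)
    (hloc : ∃ U ∈ nhds z, ∀ x ∈ U,
      Filter.Tendsto (fun n => g^[n] x) Filter.atTop (nhds z)) :
    ∀ x, Filter.Tendsto (fun n => g^[n] x) Filter.atTop (nhds z) := by
  classical
  have hgz : g z = z := (hfix z).mpr rfl
  set G : ℝ → ℝ := fun t => if ht : t ∈ Set.Ico (0:ℝ) 1 then (g ⟨t, ht⟩ : ℝ) else 0 with hG
  have hGval : ∀ (x : Set.Ico (0:ℝ) 1), G (x : ℝ) = (g x : ℝ) := by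
    rintro ⟨t, ht⟩; exact dif_pos ht
  have hGcont : ContinuousOn G (Set.Ico (0:ℝ) 1) := by
    rw [continuousOn_iff_continuous_restrict]
    have h1 : Set.restrict (Set.Ico (0:ℝ) 1) G = fun x => (g x : ℝ) := by
      funext x; exact hGval x
    rw [show (Set.Ico (0:ℝ) 1).domRestrict G = fun x => (g x : ℝ) from h1]
    exact continuous_subtype_val.comp hcont
  have hne : ∀ t ∈ Set.Ioo (0:ℝ) 1, G t ≠ t := by
    intro t ht h
    have ht' : t ∈ Set.Ico (0:ℝ) 1 := ⟨le_of_lt ht.1, ht.2⟩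
    have hfx : g ⟨t, ht'⟩ = ⟨t, ht'⟩ := by
      apply Subtype.ext
      rw [← hGval ⟨t, ht'⟩]; exact h
    have h0 : t = 0 := by
      have := congrArg Subtype.val ((hfix _).mp hfx)
      simpa [hz] using this
    exact absurd h0 (ne_of_gt ht.1)
  -- sign dichotomy on (0,1)
  have hdich : (∀ t ∈ Set.Ioo (0:ℝ) 1, G t < t) ∨ (∀ t ∈ Set.Ioo (0:ℝ) 1, t < G t) := by
    by_contra hc
    push_neg at hc
    obtain ⟨⟨a, ha, haG⟩, ⟨b, hb, hbG⟩⟩ := hc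
    have haG' : a < G a := lt_of_le_of_ne haG (fun h => hne a ha h.symm)
    have hbG' : G b < b := lt_of_le_of_ne hbG (hne b hb)
    have hsub : Set.uIcc a b ⊆ Set.Ioo (0:ℝ) 1 := by
      exact Set.ordConnected_Ioo.uIcc_subset ha hb
    have hsub' : Set.uIcc a b ⊆ Set.Ico (0:ℝ) 1 :=
      hsub.trans Set.Ioo_subset_Ico_self
    have hHc : ContinuousOn (fun t => G t - t) (Set.uIcc a b) :=
      (hGcont.mono hsub').sub continuousOn_id
    have h0 : (0:ℝ) ∈ Set.uIcc (G a - a) (G b - b) := by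
      rw [Set.mem_uIcc]; right; constructor <;> linarith
    obtain ⟨c, hc, hc0⟩ := intermediate_value_uIcc hHc h0
    exact hne c (hsub hc) (by linarith [sub_eq_zero.mp hc0])
  rcases hdich with hlt | hgt
  · -- g t < t on (0,1): orbits decrease to the unique fixed point 0
    intro x
    set a : ℕ → ℝ := fun n => (g^[n] x : ℝ) with ha
    have hstep : ∀ n, a (n + 1) ≤ a n := by
      intro n
      by_cases h0 : a n = 0
      · have hzn : g^[n] x = z := Subtype.ext (by rw [hz]; exact h0)
        have hzn1 : g^[n + 1] x = z := by
          rw [Function.iterate_succ_apply', hzn, hgz]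
        have : a (n + 1) = 0 := by rw [ha]; simp only [hzn1, hz]
        rw [this, h0]
      · have hmem : a n ∈ Set.Ioo (0:ℝ) 1 :=
          ⟨lt_of_le_of_ne (g^[n] x).2.1 (Ne.symm h0), (g^[n] x).2.2⟩
        have h1 := hlt _ hmem
        rw [hGval (g^[n] x)] at h1
        have h2 : a (n + 1) = (g (g^[n] x) : ℝ) := by
          rw [ha]; simp only [Function.iterate_succ_apply']
        rw [h2]; exact le_of_lt h1
    have hanti : Antitone a := antitone_nat_of_succ_le hstep
    have hbdd : BddBelow (Set.range a) := ⟨0, by rintro r ⟨n, rfl⟩; exact (g^[n] x).2.1⟩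
    have htendR : Filter.Tendsto a Filter.atTop (nhds (⨅ n, a n)) :=
      tendsto_atTop_ciInf hanti hbdd
    have hL0 : 0 ≤ ⨅ n, a n := le_ciInf fun n => (g^[n] x).2.1
    have hL1 : (⨅ n, a n) < 1 := by
      have h0 : a 0 = (x : ℝ) := by rw [ha]; simp
      exact lt_of_le_of_lt (by simpa [h0] using ciInf_le hbdd 0) x.2.2
    set w : Set.Ico (0:ℝ) 1 := ⟨⨅ n, a n, hL0, hL1⟩ with hw
    have htend : Filter.Tendsto (fun n => g^[n] x) Filter.atTop (nhds w) := by
      rw [Topology.IsEmbedding.subtypeVal.tendsto_nhds_iff]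
      exact htendR
    have h1 : Filter.Tendsto (fun n => g (g^[n] x)) Filter.atTop (nhds (g w)) :=
      ((hcont.tendsto w).comp htend)
    have h2 : Filter.Tendsto (fun n => g^[n + 1] x) Filter.atTop (nhds w) :=
      htend.comp (Filter.tendsto_add_atTop_nat 1)
    have heq : (fun n => g^[n + 1] x) = fun n => g (g^[n] x) := by
      funext n; exact Function.iterate_succ_apply' g n x
    rw [heq] at h2
    have hwz : w = z := (hfix w).mp (tendsto_nhds_unique h1 h2)
    rwa [hwz] at htend
  · -- t < G t on (0,1): contradicts local attraction
    exfalso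
    obtain ⟨U, hU, hUt⟩ := hloc
    rw [mem_nhds_subtype] at hU
    obtain ⟨V, hV, hVU⟩ := hU
    rw [hz] at hV
    obtain ⟨ε, hε, hball⟩ := Metric.mem_nhds_iff.mp hV
    set t0 : ℝ := min (ε / 2) (1 / 2) with ht0
    have ht0pos : 0 < t0 := lt_min (by linarith) (by norm_num)
    have ht0lt1 : t0 < 1 := lt_of_le_of_lt (min_le_right _ _) (by norm_num)
    have ht0mem : t0 ∈ Set.Ico (0:ℝ) 1 := ⟨le_of_lt ht0pos, ht0lt1⟩
    have hx0U : (⟨t0, ht0mem⟩ : Set.Ico (0:ℝ) 1) ∈ U := by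
      apply hVU
      apply hball
      simp only [Metric.mem_ball, Real.dist_eq]
      rw [sub_zero, abs_of_pos ht0pos]
      exact lt_of_le_of_lt (min_le_left _ _) (by linarith)
    have hlb : ∀ n, t0 ≤ (g^[n] (⟨t0, ht0mem⟩ : Set.Ico (0:ℝ) 1) : ℝ) := by
      intro n
      induction n with
      | zero => simp
      | succ n ih =>
        have hmem : ((g^[n] (⟨t0, ht0mem⟩ : Set.Ico (0:ℝ) 1) : ℝ)) ∈ Set.Ioo (0:ℝ) 1 :=
          ⟨lt_of_lt_of_le ht0pos ih, (g^[n] _).2.2⟩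
        have h1 := hgt _ hmem
        rw [hGval] at h1
        rw [Function.iterate_succ_apply']
        exact le_of_lt (lt_of_le_of_lt ih h1)
    have htend := hUt _ hx0U
    rw [Topology.IsEmbedding.subtypeVal.tendsto_nhds_iff, hz] at htend
    have : t0 ≤ 0 := ge_of_tendsto htend (Filter.Eventually.of_forall hlb)
    linarith
end

section
/- Let A : ℝ^N → ℝ^N be a linear map all of whose (complex) eigenvalues λ satisfy α < |λ| < β for given reals 0 < α < β. Then there exists an inner product on ℝ^N whose associated norm ‖·‖ satisfies α‖x‖ ≤ ‖Ax‖ ≤ β‖x‖ for all x ∈ ℝ^N. -/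
open Polynomial Matrix Filter Topology
open scoped NNReal ENNReal

attribute [local instance] Matrix.linftyOpNormedAddCommGroup Matrix.linftyOpNormedRing
  Matrix.linftyOpNormedAlgebra

open Polynomial Matrix

lemma eval_charpoly' {n : ℕ} (M : Matrix (Fin n) (Fin n) ℂ) (μ : ℂ) :
    M.charpoly.eval μ = (Matrix.scalar (Fin n) μ - M).det := by
  rw [Matrix.charpoly, eval_det, matPolyEquiv_charmatrix]
  simp

lemma spec_root {n : ℕ} (M : Matrix (Fin n) (Fin n) ℂ) (μ : ℂ) (h : μ ∈ spectrum ℂ M) :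
    M.charpoly.IsRoot μ := by
  rw [spectrum.mem_iff] at h
  rw [Polynomial.IsRoot, eval_charpoly']
  by_contra hd
  exact h ((Matrix.isUnit_iff_isUnit_det _).mpr (isUnit_iff_ne_zero.mpr hd))

lemma gelfand_bound {n : ℕ} (M : Matrix (Fin n) (Fin n) ℂ) (γ : ℝ) (hγ : 0 < γ)
    (h : ∀ μ ∈ spectrum ℂ M, ‖μ‖ < γ) {c : ℝ} (hc : 0 < c) :
    ∀ᶠ m in atTop, ∀ y : Fin n → ℂ, ‖(M ^ m).mulVec y‖ ≤ c * γ ^ m * ‖y‖ := by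

  obtain ⟨r, hr1, hr2⟩ : ∃ r : ℝ≥0, spectralRadius ℂ M < r ∧ (r : ℝ) < γ := by
    rcases Set.eq_empty_or_nonempty (spectrum ℂ M) with he | hne
    · refine ⟨NNReal.mk (γ/2) (by positivity), ?_, by simpa using half_lt_self hγ⟩
      have h0 : spectralRadius ℂ M = 0 := by rw [spectralRadius, he]; simp
      rw [h0]
      rw [ENNReal.coe_pos, ← NNReal.coe_pos, NNReal.coe_mk]
      positivity
    · obtain ⟨k, hk, hkr⟩ := spectrum.exists_nnnorm_eq_spectralRadius_of_nonempty hne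
      refine ⟨NNReal.mk ((‖k‖ + γ)/2) (by positivity), ?_, ?_⟩
      · rw [← hkr]
        have h1 : ‖k‖ < (‖k‖ + γ)/2 := by linarith [h k hk]
        exact_mod_cast ENNReal.coe_lt_coe.mpr (by exact_mod_cast h1)
      · simp only [NNReal.coe_mk]
        linarith [h k hk]
  have hgel := spectrum.pow_nnnorm_pow_one_div_tendsto_nhds_spectralRadius M
  have hev : ∀ᶠ m : ℕ in atTop, (‖M ^ m‖₊ : ℝ≥0∞) ^ (1 / (m:ℝ)) < r :=
    hgel.eventually_lt_const hr1
  have hnorm : ∀ᶠ m : ℕ in atTop, ‖M ^ m‖ ≤ (r:ℝ) ^ m := by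
    filter_upwards [hev, eventually_ge_atTop 1] with m hm hm1
    have hm0 : (m:ℝ) ≠ 0 := by positivity
    have : ((‖M ^ m‖₊ : ℝ≥0∞) ^ (1 / (m:ℝ))) ^ (m:ℝ) ≤ (r : ℝ≥0∞) ^ (m:ℝ) :=
      ENNReal.rpow_le_rpow hm.le (by positivity)
    rw [← ENNReal.rpow_mul, one_div, inv_mul_cancel₀ hm0, ENNReal.rpow_one] at this
    rw [ENNReal.rpow_natCast, ← ENNReal.coe_pow] at this
    have h3 : ‖M ^ m‖₊ ≤ r ^ m := by exact_mod_cast this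
    calc ‖M ^ m‖ = ((‖M ^ m‖₊ : ℝ≥0) : ℝ) := rfl
    _ ≤ ((r ^ m : ℝ≥0) : ℝ) := by exact_mod_cast h3
    _ = (r:ℝ) ^ m := by push_cast; ring
  have hsmall : ∀ᶠ m : ℕ in atTop, (r:ℝ) ^ m ≤ c * γ ^ m := by
    have hlt : (r:ℝ)/γ < 1 := (div_lt_one hγ).mpr hr2
    have h0 : (0:ℝ) ≤ (r:ℝ)/γ := by positivity
    have := tendsto_pow_atTop_nhds_zero_of_lt_one h0 hlt
    filter_upwards [this.eventually_le_const hc] with m hm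
    have := mul_le_mul_of_nonneg_right hm (le_of_lt (pow_pos hγ m))
    rwa [div_pow, div_mul_cancel₀] at this
    positivity
  filter_upwards [hnorm, hsmall] with m h1 h2 y
  calc ‖(M ^ m).mulVec y‖ ≤ ‖M ^ m‖ * ‖y‖ := Matrix.linfty_opNorm_mulVec _ _
  _ ≤ (c * γ ^ m) * ‖y‖ := by
      apply mul_le_mul_of_nonneg_right (h1.trans h2) (norm_nonneg _)


lemma map_pow_ofReal {N : ℕ} (A : Matrix (Fin N) (Fin N) ℝ) (m : ℕ) :
    (A.map Complex.ofReal) ^ m = (A ^ m).map Complex.ofReal := by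
  induction m with
  | zero => simp [Matrix.map_one]
  | succ k ih =>
      rw [pow_succ, pow_succ, ih]
      ext i j
      simp only [Matrix.mul_apply, Matrix.map_apply]
      push_cast
      rfl

lemma pow_dot_bound {N : ℕ} (A : Matrix (Fin N) (Fin N) ℝ) (γ : ℝ) (hγ : 0 < γ)
    (h : ∀ μ ∈ spectrum ℂ (A.map Complex.ofReal), ‖μ‖ < γ) {c : ℝ} (hc : 0 < c) :
    ∀ᶠ m in atTop, ∀ x : Fin N → ℝ,
      ((A ^ m).mulVec x) ⬝ᵥ ((A ^ m).mulVec x) ≤ (c * (γ ^ m * γ ^ m)) * (x ⬝ᵥ x) := by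
  have hc' : (0:ℝ) < Real.sqrt (c / (N + 1)) := Real.sqrt_pos.mpr (by positivity)
  set c' := Real.sqrt (c / (N + 1)) with hc'def
  filter_upwards [gelfand_bound (A.map Complex.ofReal) γ hγ h hc'] with m hm x
  set v := (A ^ m).mulVec x with hv
  have hmap : ((A.map Complex.ofReal) ^ m).mulVec (fun i => (x i : ℂ))
      = fun i => ((v i : ℝ) : ℂ) := by
    funext i
    rw [map_pow_ofReal]
    simp only [Matrix.mulVec, dotProduct, Matrix.map_apply, hv]
    push_cast
    rfl
  have hdot0 : (0:ℝ) ≤ x ⬝ᵥ x := Finset.sum_nonneg fun i _ => mul_self_nonneg _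
  have hxc : ‖(fun i => (x i : ℂ))‖ ≤ Real.sqrt (x ⬝ᵥ x) := by
    apply pi_norm_le_iff_of_nonneg (Real.sqrt_nonneg _) |>.mpr
    intro i
    rw [Complex.norm_real]
    apply Real.abs_le_sqrt
    rw [sq]
    exact Finset.single_le_sum (fun j _ => mul_self_nonneg (x j)) (Finset.mem_univ i)
  have hb := hm (fun i => (x i : ℂ))
  rw [hmap] at hb
  have hvi : ∀ i, |v i| ≤ c' * γ ^ m * Real.sqrt (x ⬝ᵥ x) := by
    intro i
    have h1 : ‖((v i : ℝ) : ℂ)‖ ≤ ‖fun i => ((v i : ℝ) : ℂ)‖ := norm_le_pi_norm (fun j => ((v j : ℝ) : ℂ)) i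
    rw [Complex.norm_real] at h1
    refine h1.trans (hb.trans ?_)
    have : (0:ℝ) ≤ c' * γ ^ m := by positivity
    exact mul_le_mul_of_nonneg_left hxc this
  calc v ⬝ᵥ v = ∑ i, v i * v i := rfl
  _ ≤ ∑ _i : Fin N, (c' * γ ^ m * Real.sqrt (x ⬝ᵥ x)) * (c' * γ ^ m * Real.sqrt (x ⬝ᵥ x)) := by
      apply Finset.sum_le_sum
      intro i _
      calc v i * v i = |v i| * |v i| := (abs_mul_abs_self _).symm
      _ ≤ _ := mul_self_le_mul_self (abs_nonneg _) (hvi i)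
  _ = (N : ℝ) * (c' * c') * (γ ^ m * γ ^ m) * (Real.sqrt (x ⬝ᵥ x) * Real.sqrt (x ⬝ᵥ x)) := by
      rw [Finset.sum_const, Finset.card_univ, Fintype.card_fin, nsmul_eq_mul]
      ring
  _ ≤ (c * (γ ^ m * γ ^ m)) * (x ⬝ᵥ x) := by
      rw [Real.mul_self_sqrt hdot0, hc'def, Real.mul_self_sqrt (by positivity)]
      have hN : (N : ℝ) * (c / (N + 1)) ≤ c := by
        rw [div_eq_mul_inv]
        have h1 : (N:ℝ) ≤ (N:ℝ) + 1 := by linarith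
        calc (N:ℝ) * (c * ((N:ℝ)+1)⁻¹) = c * ((N:ℝ) / ((N:ℝ)+1)) := by ring
        _ ≤ c * 1 := by
            apply mul_le_mul_of_nonneg_left _ hc.le
            rw [div_le_one (by positivity)]; exact h1
        _ = c := mul_one c
      have h2 : (0:ℝ) ≤ (γ ^ m * γ ^ m) * (x ⬝ᵥ x) := by positivity
      calc (N:ℝ) * (c / (↑N + 1)) * (γ ^ m * γ ^ m) * (x ⬝ᵥ x)
          = ((N:ℝ) * (c / (↑N + 1))) * ((γ ^ m * γ ^ m) * (x ⬝ᵥ x)) := by ring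
      _ ≤ c * ((γ ^ m * γ ^ m) * (x ⬝ᵥ x)) := mul_le_mul_of_nonneg_right hN h2
      _ = (c * (γ ^ m * γ ^ m)) * (x ⬝ᵥ x) := by ring

lemma sum_shift_up (n : ℕ) (b : ℝ) (hb : b ≠ 0) (q : ℕ → ℝ) :
    ∑ k ∈ Finset.range n, (b⁻¹)^k * q (k+1)
      = b * (∑ k ∈ Finset.range n, (b⁻¹)^k * q k) - b * q 0 + b * ((b⁻¹)^n * q n) := by
  have h0 : ∀ k, (b⁻¹)^k * q (k+1) = b * ((b⁻¹)^(k+1) * q (k+1)) := by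
    intro k
    rw [pow_succ]
    field_simp
  rw [Finset.sum_congr rfl fun k _ => h0 k, ← Finset.mul_sum]
  have h2 : ∑ k ∈ Finset.range n, (b⁻¹)^(k+1) * q (k+1)
      = (∑ k ∈ Finset.range (n+1), (b⁻¹)^k * q k) - (b⁻¹)^0 * q 0 := by
    rw [Finset.sum_range_succ']
    ring
  rw [h2, Finset.sum_range_succ]
  ring

lemma sum_shift_down (n : ℕ) (a : ℝ) (r : ℕ → ℝ) :
    ∑ k ∈ Finset.range n, a^(k+1) * r k
      = a * (r 0 + (∑ k ∈ Finset.range n, a^(k+1) * r (k+1)) - a^n * r n) := by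
  have h0 : ∀ k, a^(k+1) * r k = a * (a^k * r k) := fun k => by rw [pow_succ]; ring
  rw [Finset.sum_congr rfl fun k _ => h0 k, ← Finset.mul_sum]
  congr 1
  have h2 : ∑ k ∈ Finset.range n, a^k * r k
      = (∑ k ∈ Finset.range (n+1), a^k * r k) - a^n * r n := by
    rw [Finset.sum_range_succ]
    ring
  rw [h2, Finset.sum_range_succ']
  simp only [pow_zero, one_mul]
  have h3 : ∀ k, a^(k+1) * r (k+1) = a * (a^k * r (k+1)) := fun k => by rw [pow_succ]; ring
  rw [Finset.sum_congr rfl fun k _ => h3 k]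
  ring

set_option maxHeartbeats 1000000 in
/-- Adapted norms: if every complex eigenvalue `λ` of a real `N × N` matrix `A`
satisfies `α < |λ| < β` (where `0 < α < β`), then there is an inner product on
`ℝ^N` whose norm `x ↦ √⟨x,x⟩` satisfies `α‖x‖ ≤ ‖Ax‖ ≤ β‖x‖`. -/
theorem stmt_12 (N : ℕ) (A : Matrix (Fin N) (Fin N) ℝ) (α β : ℝ)
    (hα : 0 < α) (hαβ : α < β)
    (heig : ∀ μ : ℂ, (A.map (Complex.ofReal)).charpoly.IsRoot μ →
      α < ‖μ‖ ∧ ‖μ‖ < β) :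
    ∃ B : (Fin N → ℝ) →ₗ[ℝ] (Fin N → ℝ) →ₗ[ℝ] ℝ,
      (∀ x y, B x y = B y x) ∧ (∀ x, x ≠ 0 → 0 < B x x) ∧
      ∀ x : Fin N → ℝ,
        α * Real.sqrt (B x x) ≤ Real.sqrt (B (A.mulVec x) (A.mulVec x)) ∧
        Real.sqrt (B (A.mulVec x) (A.mulVec x)) ≤ β * Real.sqrt (B x x) := by
  have hβ : 0 < β := hα.trans hαβ
  set Ac := A.map Complex.ofReal with hAc
  -- upper spectral bound
  have h_spec_b : ∀ μ ∈ spectrum ℂ Ac, ‖μ‖ < β := fun μ hμ => (heig μ (spec_root _ _ hμ)).2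
  -- invertibility
  have hAcunit : IsUnit Ac := by
    by_contra hnu
    have h0 : (0:ℂ) ∈ spectrum ℂ Ac := (spectrum.zero_mem_iff (R := ℂ)).mpr hnu
    have := (heig 0 (spec_root _ _ h0)).1
    simp at this
    linarith
  have hdet : IsUnit A.det := by
    by_contra hd
    have hd0 : A.det = 0 := by simpa [isUnit_iff_ne_zero] using hd
    have : Ac.det = 0 := by
      have : Ac.det = (A.det : ℂ) := by
        rw [hAc]
        exact (RingHom.map_det Complex.ofRealHom A).symm ▸ rfl
      rw [this, hd0, Complex.ofReal_zero]
    exact (Matrix.isUnit_iff_isUnit_det Ac).mp hAcunit |>.ne_zero (by exact_mod_cast this)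
  have hA'A : A⁻¹ * A = 1 := Matrix.nonsing_inv_mul A hdet
  -- inverse spectral bound
  have hmapinv : (A⁻¹).map Complex.ofReal = Ac⁻¹ := by
    symm
    apply Matrix.inv_eq_left_inv
    rw [hAc]
    have : (A⁻¹).map Complex.ofReal * A.map Complex.ofReal = (A⁻¹ * A).map Complex.ofReal := by
      ext i j
      simp only [Matrix.mul_apply, Matrix.map_apply]
      push_cast
      rfl
    rw [this, hA'A, Matrix.map_one _ Complex.ofReal_zero Complex.ofReal_one]
  have h_spec_a : ∀ μ ∈ spectrum ℂ ((A⁻¹).map Complex.ofReal), ‖μ‖ < 1/α := by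
    intro μ hμ
    rw [hmapinv] at hμ
    set u := hAcunit.unit with hu
    have hcu : (↑u⁻¹ : Matrix (Fin N) (Fin N) ℂ) = Ac⁻¹ := by
      rw [Matrix.coe_units_inv, hAcunit.unit_spec]
    rw [← hcu] at hμ
    have hμ0 : μ ≠ 0 := spectrum.ne_zero_of_mem_of_unit hμ
    have h2 : μ⁻¹ ∈ spectrum ℂ Ac := by
      have hiff := (spectrum.inv₀_mem_inv_iff (R := ℂ) (a := u) (r := μ⁻¹))
      rw [inv_inv] at hiff
      have h3 := hiff.mp hμ
      rwa [hAcunit.unit_spec] at h3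
    have hlt := (heig μ⁻¹ (spec_root _ _ h2)).1
    rw [norm_inv] at hlt
    have hn : 0 < ‖μ‖ := norm_pos_iff.mpr hμ0
    rw [lt_div_iff₀ hα]
    have := mul_lt_mul_of_pos_right hlt hn
    rwa [inv_mul_cancel₀ hn.ne', mul_comm α ‖μ‖] at this
  -- constants
  set c₁ : ℝ := (β*β - α*α)/(β*β) with hc₁def
  have hc₁ : 0 < c₁ := by
    apply div_pos _ (by positivity)
    nlinarith
  have ev1 := pow_dot_bound A β hβ h_spec_b hc₁
  have ev2 := pow_dot_bound A⁻¹ (1/α) (by positivity) h_spec_a hc₁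
  obtain ⟨n₁, hn₁⟩ := eventually_atTop.mp ev1
  obtain ⟨n₂, hn₂⟩ := eventually_atTop.mp ev2
  set n := max 2 (max n₁ n₂) with hn
  have hn2 : 2 ≤ n := le_max_left _ _
  have h1 := hn₁ n (le_trans (le_max_left _ _) (le_max_right _ _))
  have h2 := hn₂ (n+1) (le_trans (le_max_right _ _) ((le_max_right _ _).trans (Nat.le_succ n)))
  -- abbreviations
  set Q : ℕ → (Fin N → ℝ) → ℝ := fun k x => ((A^k).mulVec x) ⬝ᵥ ((A^k).mulVec x) with hQ
  set R : ℕ → (Fin N → ℝ) → ℝ := fun k x => ((A⁻¹^k).mulVec x) ⬝ᵥ ((A⁻¹^k).mulVec x) with hR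
  -- the bilinear form
  set f : (Fin N → ℝ) → (Fin N → ℝ) → ℝ := fun x y =>
    (∑ k ∈ Finset.range n, ((β*β)⁻¹)^k * (((A^k).mulVec x) ⬝ᵥ ((A^k).mulVec y)))
    + (∑ k ∈ Finset.range n, (α*α)^(k+1) * (((A⁻¹^(k+1)).mulVec x) ⬝ᵥ ((A⁻¹^(k+1)).mulVec y))) with hf
  have hadd1 : ∀ x x' y, f (x + x') y = f x y + f x' y := by
    intro x x' y
    simp only [hf, Matrix.mulVec_add, add_dotProduct, mul_add,
      Finset.sum_add_distrib]
    ring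
  have hsmul1 : ∀ (c : ℝ) x y, f (c • x) y = c * f x y := by
    intro c x y
    simp only [hf, Matrix.mulVec_smul, smul_dotProduct, smul_eq_mul]
    rw [mul_add, Finset.mul_sum, Finset.mul_sum]
    congr 1 <;> exact Finset.sum_congr rfl (fun k _ => by ring)
  have hsymm : ∀ x y, f x y = f y x := by
    intro x y
    simp only [hf]
    congr 1 <;> exact Finset.sum_congr rfl (fun k _ => by rw [dotProduct_comm])
  have hadd2 : ∀ x y y', f x (y + y') = f x y + f x y' := by
    intro x y y'
    rw [hsymm, hadd1, hsymm y x, hsymm y' x]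
  have hsmul2 : ∀ (c : ℝ) x y, f x (c • y) = c * f x y := by
    intro c x y
    rw [hsymm, hsmul1, hsymm]
  refine ⟨LinearMap.mk₂ ℝ f hadd1 hsmul1 hadd2 hsmul2, ?_, ?_, ?_⟩
  · intro x y
    simp only [LinearMap.mk₂_apply]
    exact hsymm x y
  · -- positive definiteness
    intro x hx
    simp only [LinearMap.mk₂_apply]
    have hxx : 0 < x ⬝ᵥ x := by
      rcases lt_or_eq_of_le (Finset.sum_nonneg fun i (_ : i ∈ Finset.univ) =>
        mul_self_nonneg (x i) : (0:ℝ) ≤ x ⬝ᵥ x) with h | h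
      · exact h
      · exact absurd (dotProduct_self_eq_zero.mp h.symm) hx
    have hfirst : x ⬝ᵥ x ≤ ∑ k ∈ Finset.range n,
        ((β*β)⁻¹)^k * (((A^k).mulVec x) ⬝ᵥ ((A^k).mulVec x)) := by
      have h0mem : 0 ∈ Finset.range n := Finset.mem_range.mpr (by omega)
      have := Finset.single_le_sum
        (f := fun k => ((β*β)⁻¹)^k * (((A^k).mulVec x) ⬝ᵥ ((A^k).mulVec x)))
        (fun k _ => by
          have hd : (0:ℝ) ≤ ((A^k).mulVec x) ⬝ᵥ ((A^k).mulVec x) :=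
            Finset.sum_nonneg fun i _ => mul_self_nonneg _
          positivity) h0mem
      simpa [Matrix.one_mulVec] using this
    have hsecond : (0:ℝ) ≤ ∑ k ∈ Finset.range n,
        (α*α)^(k+1) * (((A⁻¹^(k+1)).mulVec x) ⬝ᵥ ((A⁻¹^(k+1)).mulVec x)) := by
      apply Finset.sum_nonneg
      intro k _
      have h1' : (0:ℝ) ≤ ((A⁻¹^(k+1)).mulVec x) ⬝ᵥ ((A⁻¹^(k+1)).mulVec x) :=
        Finset.sum_nonneg fun i _ => mul_self_nonneg _
      positivity
    have : x ⬝ᵥ x ≤ f x x := by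
      rw [hf]
      simp only
      linarith
    linarith
  · -- the norm inequalities
    intro x
    simp only [LinearMap.mk₂_apply]
    have hdots : ∀ v : Fin N → ℝ, (0:ℝ) ≤ v ⬝ᵥ v :=
      fun v => Finset.sum_nonneg fun i _ => mul_self_nonneg _
    have hββ : (β*β) ≠ 0 := by positivity
    have hba : (0:ℝ) ≤ β*β - α*α := by nlinarith
    have hfAx : f (A.mulVec x) (A.mulVec x)
        = (∑ k ∈ Finset.range n, ((β*β)⁻¹)^k * (((A^(k+1)).mulVec x) ⬝ᵥ ((A^(k+1)).mulVec x)))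
        + (∑ k ∈ Finset.range n, (α*α)^(k+1) * (((A⁻¹^k).mulVec x) ⬝ᵥ ((A⁻¹^k).mulVec x))) := by
      have e1 : ∀ k : ℕ, ((A^k).mulVec (A.mulVec x)) ⬝ᵥ ((A^k).mulVec (A.mulVec x))
          = ((A^(k+1)).mulVec x) ⬝ᵥ ((A^(k+1)).mulVec x) := fun k => by
        rw [Matrix.mulVec_mulVec, ← pow_succ]
      have e2 : ∀ k : ℕ, ((A⁻¹^(k+1)).mulVec (A.mulVec x)) ⬝ᵥ ((A⁻¹^(k+1)).mulVec (A.mulVec x))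
          = ((A⁻¹^k).mulVec x) ⬝ᵥ ((A⁻¹^k).mulVec x) := fun k => by
        rw [Matrix.mulVec_mulVec, pow_succ, mul_assoc, hA'A, mul_one]
      rw [hf]
      exact congrArg₂ (· + ·) (Finset.sum_congr rfl fun k _ => by rw [e1 k])
        (Finset.sum_congr rfl fun k _ => by rw [e2 k])
    have F1 := sum_shift_up n (β*β) hββ
      (fun k => ((A^k).mulVec x) ⬝ᵥ ((A^k).mulVec x))
    simp only [pow_zero, Matrix.one_mulVec] at F1
    have F2 := sum_shift_down n (α*α)
      (fun k => ((A⁻¹^k).mulVec x) ⬝ᵥ ((A⁻¹^k).mulVec x))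
    simp only [pow_zero, Matrix.one_mulVec] at F2
    have G1 : ((β*β)⁻¹)^n * (((A^n).mulVec x) ⬝ᵥ ((A^n).mulVec x)) ≤ c₁ * (x ⬝ᵥ x) := by
      have h := h1 x
      have hcoef : ((β*β)⁻¹)^n * (β^n * β^n) = 1 := by
        rw [mul_comm (β^n), ← mul_pow, ← mul_pow, inv_mul_cancel₀ hββ, one_pow]
      calc ((β*β)⁻¹)^n * (((A^n).mulVec x) ⬝ᵥ ((A^n).mulVec x))
          ≤ ((β*β)⁻¹)^n * ((c₁ * (β^n * β^n)) * (x ⬝ᵥ x)) :=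
            mul_le_mul_of_nonneg_left h (by positivity)
      _ = (((β*β)⁻¹)^n * (β^n * β^n)) * (c₁ * (x ⬝ᵥ x)) := by ring
      _ = c₁ * (x ⬝ᵥ x) := by rw [hcoef, one_mul]
    have G2 : (α*α) * ((α*α)^n * (((A⁻¹^n).mulVec x) ⬝ᵥ ((A⁻¹^n).mulVec x)))
        ≤ c₁ * ((A.mulVec x) ⬝ᵥ (A.mulVec x)) := by
      have h := h2 (A.mulVec x)
      have hid : (A⁻¹^(n+1)).mulVec (A.mulVec x) = (A⁻¹^n).mulVec x := by
        rw [Matrix.mulVec_mulVec, pow_succ, mul_assoc, hA'A, mul_one]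
      rw [hid] at h
      have hcoef : (α*α)^(n+1) * ((1/α)^(n+1) * (1/α)^(n+1)) = 1 := by
        have hinner : (α*α) * ((1/α) * (1/α)) = 1 := by field_simp
        rw [← mul_pow, ← mul_pow, hinner, one_pow]
      calc (α*α) * ((α*α)^n * (((A⁻¹^n).mulVec x) ⬝ᵥ ((A⁻¹^n).mulVec x)))
          = (α*α)^(n+1) * (((A⁻¹^n).mulVec x) ⬝ᵥ ((A⁻¹^n).mulVec x)) := by
            rw [pow_succ]; ring
      _ ≤ (α*α)^(n+1) * ((c₁ * ((1/α)^(n+1) * (1/α)^(n+1))) * ((A.mulVec x) ⬝ᵥ (A.mulVec x))) :=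
            mul_le_mul_of_nonneg_left h (by positivity)
      _ = ((α*α)^(n+1) * ((1/α)^(n+1) * (1/α)^(n+1))) * (c₁ * ((A.mulVec x) ⬝ᵥ (A.mulVec x))) := by
            ring
      _ = c₁ * ((A.mulVec x) ⬝ᵥ (A.mulVec x)) := by rw [hcoef, one_mul]
    have first2 : (x ⬝ᵥ x) + (β*β)⁻¹ * ((A.mulVec x) ⬝ᵥ (A.mulVec x))
        ≤ ∑ k ∈ Finset.range n, ((β*β)⁻¹)^k * (((A^k).mulVec x) ⬝ᵥ ((A^k).mulVec x)) := by
      have hsub : Finset.range 2 ⊆ Finset.range n := Finset.range_subset_range.mpr hn2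
      have hmono := Finset.sum_le_sum_of_subset_of_nonneg
        (f := fun k => ((β*β)⁻¹)^k * (((A^k).mulVec x) ⬝ᵥ ((A^k).mulVec x))) hsub
        (fun k _ _ => mul_nonneg (by positivity) (hdots _))
      calc (x ⬝ᵥ x) + (β*β)⁻¹ * ((A.mulVec x) ⬝ᵥ (A.mulVec x))
          = ∑ k ∈ Finset.range 2, ((β*β)⁻¹)^k * (((A^k).mulVec x) ⬝ᵥ ((A^k).mulVec x)) := by
            rw [Finset.sum_range_succ, Finset.sum_range_succ, Finset.sum_range_zero]
            simp [Matrix.one_mulVec]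
      _ ≤ _ := hmono
    have hg' : (β*β) * (((β*β)⁻¹)^n * (((A^n).mulVec x) ⬝ᵥ ((A^n).mulVec x)))
        ≤ (β*β - α*α) * (x ⬝ᵥ x) := by
      have h := mul_le_mul_of_nonneg_left G1 (by positivity : (0:ℝ) ≤ β*β)
      calc (β*β) * (((β*β)⁻¹)^n * (((A^n).mulVec x) ⬝ᵥ ((A^n).mulVec x)))
          ≤ (β*β) * (c₁ * (x ⬝ᵥ x)) := h
      _ = (β*β - α*α) * (x ⬝ᵥ x) := by rw [hc₁def]; field_simp
    have hfirst2' : (β*β - α*α) * (x ⬝ᵥ x) + c₁ * ((A.mulVec x) ⬝ᵥ (A.mulVec x))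
        ≤ (β*β - α*α) * (∑ k ∈ Finset.range n,
            ((β*β)⁻¹)^k * (((A^k).mulVec x) ⬝ᵥ ((A^k).mulVec x))) := by
      have h := mul_le_mul_of_nonneg_left first2 hba
      calc (β*β - α*α) * (x ⬝ᵥ x) + c₁ * ((A.mulVec x) ⬝ᵥ (A.mulVec x))
          = (β*β - α*α) * ((x ⬝ᵥ x) + (β*β)⁻¹ * ((A.mulVec x) ⬝ᵥ (A.mulVec x))) := by
            rw [hc₁def]; field_simp
      _ ≤ _ := h
    have hTnn : (0:ℝ) ≤ ∑ k ∈ Finset.range n,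
        (α*α)^(k+1) * (((A⁻¹^(k+1)).mulVec x) ⬝ᵥ ((A⁻¹^(k+1)).mulVec x)) :=
      Finset.sum_nonneg fun k _ => mul_nonneg (by positivity) (hdots _)
    have hSnn : (0:ℝ) ≤ ∑ k ∈ Finset.range n,
        ((β*β)⁻¹)^k * (((A^k).mulVec x) ⬝ᵥ ((A^k).mulVec x)) :=
      Finset.sum_nonneg fun k _ => mul_nonneg (by positivity) (hdots _)
    have hqn : (0:ℝ) ≤ (β*β) * (((β*β)⁻¹)^n * (((A^n).mulVec x) ⬝ᵥ ((A^n).mulVec x))) :=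
      mul_nonneg (by positivity) (mul_nonneg (by positivity) (hdots _))
    have hrn : (0:ℝ) ≤ (α*α) * ((α*α)^n * (((A⁻¹^n).mulVec x) ⬝ᵥ ((A⁻¹^n).mulVec x))) :=
      mul_nonneg (by positivity) (mul_nonneg (by positivity) (hdots _))
    have hTba : (0:ℝ) ≤ (β*β - α*α) * (∑ k ∈ Finset.range n,
        (α*α)^(k+1) * (((A⁻¹^(k+1)).mulVec x) ⬝ᵥ ((A⁻¹^(k+1)).mulVec x))) :=
      mul_nonneg hba hTnn
    have hfnn : (0:ℝ) ≤ f x x := by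
      rw [hf]
      simp only
      linarith
    have hlow : (α*α) * f x x ≤ f (A.mulVec x) (A.mulVec x) := by
      rw [hfAx, hf]
      simp only
      linarith [F1, F2, hfirst2', G2, hqn, hTnn]
    have hup : f (A.mulVec x) (A.mulVec x) ≤ (β*β) * f x x := by
      rw [hfAx, hf]
      simp only
      linarith [F1, F2, hg', hTba, hrn]
    constructor
    · have h := Real.sqrt_le_sqrt hlow
      rwa [Real.sqrt_mul (by positivity : (0:ℝ) ≤ α*α), Real.sqrt_mul_self hα.le] at h
    · have h := Real.sqrt_le_sqrt hup
      rwa [Real.sqrt_mul (by positivity : (0:ℝ) ≤ β*β), Real.sqrt_mul_self hβ.le] at h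
end

section
/- Let f : ℝ^N → ℝ^N be continuous, differentiable at 0, with f(0) = 0, and suppose all eigenvalues of Df(0) have absolute value strictly less than 1. Then 0 is locally asymptotically stable: there is a neighbourhood of 0 on which f is a uniform contraction with respect to some norm, and all orbits starting in this neighbourhood converge to 0. -/
open Matrix Polynomial Filter

lemma aux_spec_root {n : Type*} [Fintype n] [DecidableEq n] {K : Type*} [Field K]
    (A : Matrix n n K) (μ : K) (h : μ ∈ spectrum K A) : A.charpoly.IsRoot μ := by
  rw [spectrum.mem_iff] at h
  rw [Polynomial.IsRoot]
  by_contra hne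
  apply h
  have hdet : (A.charpoly).eval μ = (algebraMap K (Matrix n n K) μ - A).det := by
    rw [Matrix.charpoly, ← Polynomial.coe_evalRingHom, RingHom.map_det]
    congr 1
    ext i j
    by_cases hij : i = j
    · subst hij
      simp [Matrix.charmatrix_apply, Matrix.algebraMap_eq_diagonal, Matrix.diagonal_apply,
        Matrix.sub_apply]
    · simp [Matrix.charmatrix_apply, Matrix.algebraMap_eq_diagonal, Matrix.diagonal_apply,
        Matrix.sub_apply, hij]
  rw [Matrix.isUnit_iff_isUnit_det]
  rw [hdet] at hne
  exact (isUnit_iff_ne_zero).2 hne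

lemma aux_pow_small {N : ℕ} (hN : 0 < N) (D : (Fin N → ℝ) →L[ℝ] (Fin N → ℝ))
    (heig : ∀ μ : ℂ,
      ((LinearMap.toMatrix' (D : (Fin N → ℝ) →ₗ[ℝ] (Fin N → ℝ))).map
        Complex.ofReal).charpoly.IsRoot μ → ‖μ‖ < 1) :
    ∃ n : ℕ, 1 ≤ n ∧ ∃ r : ℝ, 0 < r ∧ r < 1 ∧
      ∀ x : Fin N → ℝ, ‖(D ^ n) x‖ ≤ r ^ n * ‖x‖ := by
  haveI : Nonempty (Fin N) := ⟨⟨0, hN⟩⟩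
  set M : Matrix (Fin N) (Fin N) ℝ := LinearMap.toMatrix' (D : (Fin N → ℝ) →ₗ[ℝ] (Fin N → ℝ))
    with hM
  set A : Matrix (Fin N) (Fin N) ℂ := M.map Complex.ofReal with hA
  set e : Module.End ℂ (Fin N → ℂ) ≃ₐ[ℂ] ((Fin N → ℂ) →L[ℂ] (Fin N → ℂ)) :=
    Module.End.toContinuousLinearMap (Fin N → ℂ)
  set T : (Fin N → ℂ) →L[ℂ] (Fin N → ℂ) := e (Matrix.toLinAlgEquiv' A) with hT
  have hspec : spectrum ℂ T = spectrum ℂ A := by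
    rw [hT, AlgEquiv.spectrum_eq, AlgEquiv.spectrum_eq]
  -- spectral radius < 1
  have hrad : spectralRadius ℂ T < 1 := by
    have := spectrum.spectralRadius_lt_of_forall_lt (a := T) (r := 1)
      (fun z hz => by
        rw [hspec] at hz
        have := heig z (aux_spec_root A z hz)
        exact_mod_cast this)
    simpa using this
  obtain ⟨r, hρr, hr1⟩ := ENNReal.lt_iff_exists_nnreal_btwn.mp hrad
  have hr1' : r < 1 := by exact_mod_cast hr1
  -- Gelfand
  have hgel := spectrum.pow_nnnorm_pow_one_div_tendsto_nhds_spectralRadius T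
  have hev : ∀ᶠ n : ℕ in atTop,
      (‖T ^ n‖₊ : ENNReal) ^ (1 / (n:ℝ)) < (r : ENNReal) :=
    hgel.eventually_lt_const hρr
  obtain ⟨n, hn1, hlt⟩ : ∃ n : ℕ, 1 ≤ n ∧
      (‖T ^ n‖₊ : ENNReal) ^ (1 / (n:ℝ)) < (r : ENNReal) := by
    rcases (hev.and (eventually_ge_atTop 1)).exists with ⟨n, h1, h2⟩
    exact ⟨n, h2, h1⟩
  have hnR : (0:ℝ) < n := by exact_mod_cast hn1
  have hTn : (‖T ^ n‖₊ : ENNReal) < (r : ENNReal) ^ (n : ℕ) := by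
    have := ENNReal.rpow_lt_rpow (z := (n:ℝ)) hlt hnR
    rwa [← ENNReal.rpow_mul, one_div, inv_mul_cancel₀ (ne_of_gt hnR), ENNReal.rpow_one,
      ENNReal.rpow_natCast] at this
  have hTn' : ‖T ^ n‖ < (r:ℝ) ^ n := by
    have : ‖T ^ n‖₊ < r ^ n := by exact_mod_cast hTn
    exact_mod_cast this
  refine ⟨n, hn1, max (r:ℝ) (1/2), ?_, ?_, ?_⟩
  · positivity
  · exact max_lt (by exact_mod_cast hr1') (by norm_num)
  · intro x
    set xc : Fin N → ℂ := fun i => ((x i : ℝ) : ℂ) with hxc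
    have hMn : A ^ n = (M ^ n).map Complex.ofReal := by
      rw [hA]
      have : (M.map Complex.ofReal) = Complex.ofRealHom.mapMatrix M := rfl
      rw [this, ← map_pow]
      rfl
    have key : ∀ m : ℕ, ∀ y : Fin N → ℝ, (D ^ m) y = (M ^ m).mulVec y := by
      intro m
      induction m with
      | zero => intro y; simp
      | succ m ih =>
        intro y
        have hDy : D y = M.mulVec y := by
          rw [hM, ← Matrix.toLin'_apply, Matrix.toLin'_toMatrix']
          rfl
        rw [pow_succ, pow_succ, ContinuousLinearMap.mul_apply, hDy, ih, Matrix.mulVec_mulVec]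
    have hDx : ∀ i, ((((D ^ n) x) i : ℝ) : ℂ) = ((A ^ n).mulVec xc) i := by
      intro i
      rw [key n x, hMn]
      exact RingHom.map_mulVec Complex.ofRealHom (M ^ n) x i
    have hTx : (T ^ n) xc = (A ^ n).mulVec xc := by
      rw [hT, ← map_pow, ← map_pow]
      rfl
    have hnorm1 : ‖(D ^ n) x‖ = ‖(T ^ n) xc‖ := by
      rw [hTx]
      rw [Pi.norm_def, Pi.norm_def]
      congr 1
      apply Finset.sup_congr rfl
      intro i _
      rw [← hDx i, Complex.nnnorm_real]
    have hnormx : ‖xc‖ = ‖x‖ := by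
      rw [Pi.norm_def, Pi.norm_def]
      congr 1
      exact Finset.sup_congr rfl (fun i _ => Complex.nnnorm_real (x i))
    calc ‖(D ^ n) x‖ = ‖(T ^ n) xc‖ := hnorm1
      _ ≤ ‖T ^ n‖ * ‖xc‖ := (T ^ n).le_opNorm xc
      _ ≤ (r:ℝ) ^ n * ‖x‖ := by
          rw [hnormx]
          exact mul_le_mul (le_of_lt hTn') le_rfl (norm_nonneg x) (by positivity)
      _ ≤ (max (r:ℝ) (1/2)) ^ n * ‖x‖ := by
          apply mul_le_mul _ le_rfl (norm_nonneg x) (by positivity)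
          exact pow_le_pow_left₀ (by positivity) (le_max_left _ _) n

set_option maxHeartbeats 1000000 in
/-- If `f : ℝ^N → ℝ^N` is continuous, differentiable at `0`, `f 0 = 0`, and all
complex eigenvalues of `Df(0)` have modulus `< 1`, then `0` is locally
asymptotically stable: for some norm `ν`, `f` is a uniform contraction on a
`ν`-ball around `0` and all orbits starting there converge to `0`. -/
theorem stmt_13 (N : ℕ) (f : (Fin N → ℝ) → (Fin N → ℝ))
    (hcont : Continuous f) (h0 : f 0 = 0)
    (D : (Fin N → ℝ) →L[ℝ] (Fin N → ℝ)) (hD : HasFDerivAt f D 0)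
    (heig : ∀ μ : ℂ,
      ((LinearMap.toMatrix' (D : (Fin N → ℝ) →ₗ[ℝ] (Fin N → ℝ))).map
        Complex.ofReal).charpoly.IsRoot μ → ‖μ‖ < 1) :
    ∃ ν : (Fin N → ℝ) → ℝ,
      (∀ x, 0 ≤ ν x) ∧ (∀ x, ν x = 0 ↔ x = 0) ∧
      (∀ (a : ℝ) x, ν (a • x) = |a| * ν x) ∧
      (∀ x y, ν (x + y) ≤ ν x + ν y) ∧
      ∃ δ > (0:ℝ), ∃ c : ℝ, 0 ≤ c ∧ c < 1 ∧
        (∀ x, ν x < δ → ν (f x) ≤ c * ν x) ∧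
        (∀ x, ν x < δ →
          Filter.Tendsto (fun n => f^[n] x) Filter.atTop (nhds 0)) := by
  rcases Nat.eq_zero_or_pos N with hN | hN
  · -- trivial case N = 0
    subst hN
    haveI : Subsingleton (Fin 0 → ℝ) := by infer_instance
    refine ⟨fun _ => 0, fun _ => le_refl 0, fun x => iff_of_true rfl (Subsingleton.elim x 0),
      fun a x => (mul_zero _).symm, fun x y => by norm_num, 1, one_pos, 0, le_refl 0,
      one_pos, fun x _ => by norm_num, fun x _ => ?_⟩
    have : (fun m => f^[m] x) = fun _ => (0 : Fin 0 → ℝ) := by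
      funext m; exact Subsingleton.elim _ _
    rw [this]
    exact tendsto_const_nhds
  obtain ⟨n, hn1, r, hr0, hr1, hpow⟩ := aux_pow_small hN D heig
  -- adapted norm
  set ν : (Fin N → ℝ) → ℝ := fun x => ∑ k ∈ Finset.range n, r ^ (n - 1 - k) * ‖(D ^ k) x‖
    with hν
  have hνnonneg : ∀ x, 0 ≤ ν x := fun x =>
    Finset.sum_nonneg fun k _ => by positivity
  have hlow : ∀ x, r ^ (n - 1) * ‖x‖ ≤ ν x := by
    intro x
    have h0mem : 0 ∈ Finset.range n := Finset.mem_range.mpr hn1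
    have := Finset.single_le_sum (f := fun k => r ^ (n - 1 - k) * ‖(D ^ k) x‖)
      (fun k _ => by positivity) h0mem
    simpa [hν] using this
  have hνzero : ∀ x, ν x = 0 ↔ x = 0 := by
    intro x
    constructor
    · intro h
      have h1 := hlow x
      rw [h] at h1
      have : ‖x‖ ≤ 0 := by
        have hrp : (0:ℝ) < r ^ (n - 1) := by positivity
        nlinarith [norm_nonneg x]
      exact norm_le_zero_iff.mp this
    · rintro rfl
      simp [hν]
  have hνsmul : ∀ (a : ℝ) x, ν (a • x) = |a| * ν x := by
    intro a x
    rw [hν]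
    simp only
    rw [Finset.mul_sum]
    apply Finset.sum_congr rfl
    intro k _
    rw [(D ^ k).map_smul, norm_smul, Real.norm_eq_abs]
    ring
  have hνadd : ∀ x y, ν (x + y) ≤ ν x + ν y := by
    intro x y
    rw [hν]
    simp only
    rw [← Finset.sum_add_distrib]
    apply Finset.sum_le_sum
    intro k _
    rw [map_add, ← mul_add]
    have := norm_add_le ((D ^ k) x) ((D ^ k) y)
    have hrp : (0:ℝ) ≤ r ^ (n - 1 - k) := by positivity
    nlinarith
  -- upper bound
  set C₂ : ℝ := (∑ k ∈ Finset.range n, r ^ (n - 1 - k) * ‖(D ^ k : (Fin N → ℝ) →L[ℝ] (Fin N → ℝ))‖) + 1 with hC₂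
  have hC₂pos : 0 < C₂ := by
    have : (0:ℝ) ≤ ∑ k ∈ Finset.range n, r ^ (n - 1 - k) * ‖(D ^ k : (Fin N → ℝ) →L[ℝ] (Fin N → ℝ))‖ :=
      Finset.sum_nonneg fun k _ => by positivity
    linarith
  have hup : ∀ x, ν x ≤ C₂ * ‖x‖ := by
    intro x
    have h1 : ν x ≤ ∑ k ∈ Finset.range n,
        r ^ (n - 1 - k) * (‖(D ^ k : (Fin N → ℝ) →L[ℝ] (Fin N → ℝ))‖ * ‖x‖) := by
      apply Finset.sum_le_sum
      intro k _
      have := (D ^ k).le_opNorm x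
      have hrp : (0:ℝ) ≤ r ^ (n - 1 - k) := by positivity
      nlinarith
    calc ν x ≤ _ := h1
      _ = (∑ k ∈ Finset.range n, r ^ (n - 1 - k) * ‖(D ^ k : (Fin N → ℝ) →L[ℝ] (Fin N → ℝ))‖) * ‖x‖ := by
          rw [Finset.sum_mul]; apply Finset.sum_congr rfl; intro k _; ring
      _ ≤ C₂ * ‖x‖ := by
          apply mul_le_mul_of_nonneg_right _ (norm_nonneg x)
          rw [hC₂]; linarith
  -- contraction of the linear part
  have hcontr : ∀ x, ν (D x) ≤ r * ν x := by
    intro x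
    set g : ℕ → ℝ := fun j => r ^ (n - j) * ‖(D ^ j) x‖ with hg
    have hL : ν (D x) = (∑ j ∈ Finset.range (n + 1), g j) - g 0 := by
      have h1 : ν (D x) = ∑ k ∈ Finset.range n, g (k + 1) := by
        apply Finset.sum_congr rfl
        intro k hk
        rw [hg]
        simp only
        have e1 : n - 1 - k = n - (k + 1) := by omega
        have e2 : (D ^ k) (D x) = (D ^ (k + 1)) x := by
          rw [pow_succ, ContinuousLinearMap.mul_apply]
        rw [e1, e2]
      rw [h1, Finset.sum_range_succ' g n]
      ring
    have hR : r * ν x = (∑ j ∈ Finset.range (n + 1), g j) - g n := by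
      have h1 : r * ν x = ∑ k ∈ Finset.range n, g k := by
        rw [hν, Finset.mul_sum]
        apply Finset.sum_congr rfl
        intro k hk
        rw [hg]
        simp only
        have hk' : k < n := Finset.mem_range.mp hk
        have e1 : n - k = (n - 1 - k) + 1 := by omega
        rw [e1, pow_succ]
        ring
      rw [h1, Finset.sum_range_succ g n]
      ring
    have hgn : g n ≤ g 0 := by
      rw [hg]
      simp only [Nat.sub_self, pow_zero, one_mul, Nat.sub_zero]
      exact hpow x
    linarith
  -- little-o estimate
  set C₁ : ℝ := r ^ (n - 1) with hC₁
  have hC₁pos : 0 < C₁ := by positivity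
  set c : ℝ := (1 + r) / 2 with hc
  have hrc : r < c := by rw [hc]; linarith
  have hc1 : c < 1 := by rw [hc]; linarith
  have hc0 : 0 ≤ c := by rw [hc]; linarith
  set ε : ℝ := (c - r) * C₁ / C₂ with hε
  have hεpos : 0 < ε := by
    apply div_pos _ hC₂pos
    nlinarith
  have hlo : (fun h => f h - D h) =o[nhds (0 : Fin N → ℝ)] fun h => h := by
    have := hasFDerivAt_iff_isLittleO_nhds_zero.mp hD
    simpa [h0] using this
  obtain ⟨δ₀, hδ₀pos, hδ₀⟩ : ∃ δ₀ > (0:ℝ), ∀ y : Fin N → ℝ, ‖y‖ < δ₀ →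
      ‖f y - D y‖ ≤ ε * ‖y‖ := by
    have := (hlo.def hεpos)
    rw [Metric.eventually_nhds_iff] at this
    obtain ⟨δ₀, hδ₀pos, h⟩ := this
    exact ⟨δ₀, hδ₀pos, fun y hy => by simpa using h (by simpa [dist_zero_right] using hy)⟩
  refine ⟨ν, hνnonneg, hνzero, hνsmul, hνadd, C₁ * δ₀, by positivity, c, hc0, hc1, ?_, ?_⟩
  · -- contraction of f
    intro x hx
    have hxn : ‖x‖ < δ₀ := by
      have := hlow x
      nlinarith
    have h1 : ν (f x) ≤ ν (D x) + ν (f x - D x) := by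
      have e : D x + (f x - D x) = f x := by abel
      have h := hνadd (D x) (f x - D x)
      rwa [e] at h
    have h2 : ν (f x - D x) ≤ C₂ * (ε * ‖x‖) := by
      calc ν (f x - D x) ≤ C₂ * ‖f x - D x‖ := hup _
        _ ≤ C₂ * (ε * ‖x‖) := by
            apply mul_le_mul_of_nonneg_left (hδ₀ x hxn) (le_of_lt hC₂pos)
    have h3 : C₂ * (ε * ‖x‖) ≤ (c - r) * ν x := by
      have hCε : C₂ * ε = (c - r) * C₁ := by
        rw [hε]; field_simp
      have h4 : C₁ * ‖x‖ ≤ ν x := by rw [hC₁]; exact hlow x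
      calc C₂ * (ε * ‖x‖) = (C₂ * ε) * ‖x‖ := by ring
        _ = (c - r) * (C₁ * ‖x‖) := by rw [hCε]; ring
        _ ≤ (c - r) * ν x := by
            apply mul_le_mul_of_nonneg_left h4; linarith
    have h5 := hcontr x
    linarith
  · -- convergence of orbits
    intro x hx
    have hstep : ∀ y, ν y < C₁ * δ₀ → ν (f y) ≤ c * ν y := by
      -- reprove contraction locally (same as above)
      intro y hy
      have hxn : ‖y‖ < δ₀ := by
        have := hlow y
        nlinarith
      have h1 : ν (f y) ≤ ν (D y) + ν (f y - D y) := by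
        have e : D y + (f y - D y) = f y := by abel
        have h := hνadd (D y) (f y - D y)
        rwa [e] at h
      have h2 : ν (f y - D y) ≤ C₂ * (ε * ‖y‖) :=
        calc ν (f y - D y) ≤ C₂ * ‖f y - D y‖ := hup _
          _ ≤ C₂ * (ε * ‖y‖) := mul_le_mul_of_nonneg_left (hδ₀ y hxn) (le_of_lt hC₂pos)
      have h3 : C₂ * (ε * ‖y‖) ≤ (c - r) * ν y := by
        have hCε : C₂ * ε = (c - r) * C₁ := by rw [hε]; field_simp
        have h4 : C₁ * ‖y‖ ≤ ν y := by rw [hC₁]; exact hlow y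
        calc C₂ * (ε * ‖y‖) = (C₂ * ε) * ‖y‖ := by ring
          _ = (c - r) * (C₁ * ‖y‖) := by rw [hCε]; ring
          _ ≤ (c - r) * ν y := by apply mul_le_mul_of_nonneg_left h4; linarith
      have h5 := hcontr y
      linarith
    have hiter : ∀ m : ℕ, ν (f^[m] x) ≤ c ^ m * ν x := by
      intro m
      induction m with
      | zero => simp
      | succ m ih =>
        have hsmall : ν (f^[m] x) < C₁ * δ₀ := by
          have hcm : c ^ m ≤ 1 := pow_le_one₀ hc0 (le_of_lt hc1)
          calc ν (f^[m] x) ≤ c ^ m * ν x := ih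
            _ ≤ 1 * ν x := mul_le_mul_of_nonneg_right hcm (hνnonneg x)
            _ = ν x := one_mul _
            _ < C₁ * δ₀ := hx
        rw [Function.iterate_succ_apply']
        calc ν (f (f^[m] x)) ≤ c * ν (f^[m] x) := hstep _ hsmall
          _ ≤ c * (c ^ m * ν x) := mul_le_mul_of_nonneg_left ih hc0
          _ = c ^ (m + 1) * ν x := by ring
    apply squeeze_zero_norm (a := fun m => (ν x / C₁) * c ^ m)
    · intro m
      have h3 : C₁ * ‖f^[m] x‖ ≤ c ^ m * ν x := le_trans (hlow _) (hiter m)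
      rw [div_mul_eq_mul_div, le_div_iff₀ hC₁pos]
      linarith
    · have := (tendsto_pow_atTop_nhds_zero_of_lt_one hc0 hc1).const_mul (ν x / C₁)
      simpa using this
end

section
/- Let f : ℝ^N → ℝ^N be continuous, differentiable at 0, with f(0) = 0, and suppose all eigenvalues of Df(0) have absolute value strictly greater than 1. Then 0 is a local repellor: there is δ > 0 and c > 1 with ‖f(x)‖ ≥ c‖x‖ (in a suitable norm) for all x with ‖x‖ < δ, so every nonzero orbit leaves the δ-ball. -/
open Matrix Polynomial in
lemma aux_root_of_mem_spectrum {N : ℕ} (A : Matrix (Fin N) (Fin N) ℂ) (μ : ℂ)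
    (h : μ ∈ spectrum ℂ A) : A.charpoly.IsRoot μ := by
  rw [spectrum.mem_iff, Matrix.isUnit_iff_isUnit_det] at h
  have hdet : (algebraMap ℂ (Matrix (Fin N) (Fin N) ℂ) μ - A).det = 0 := by
    by_contra h'
    exact h (isUnit_iff_ne_zero.mpr h')
  have key : A.charpoly.eval μ = (algebraMap ℂ (Matrix (Fin N) (Fin N) ℂ) μ - A).det := by
    rw [Matrix.charpoly, ← Polynomial.coe_evalRingHom, RingHom.map_det]
    congr 1
    ext i j
    by_cases hij : i = j <;>
      simp [charmatrix_apply, hij, Matrix.algebraMap_eq_diagonal, Matrix.diagonal_apply]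
  rw [Polynomial.IsRoot, key, hdet]

attribute [local instance] Matrix.linftyOpNormedAddCommGroup Matrix.linftyOpNormedSpace
  Matrix.linftyOpNormedRing Matrix.linftyOpNormedAlgebra

open Matrix in
lemma aux_expansion {N : ℕ} (hN : 0 < N) (M : Matrix (Fin N) (Fin N) ℝ)
    (heig : ∀ μ : ℂ, ((M.map Complex.ofReal).charpoly.IsRoot μ → 1 < ‖μ‖)) :
    ∃ n K, 0 < n ∧ 1 < K ∧ ∀ x : Fin N → ℝ, K * ‖x‖ ≤ ‖(M ^ n) *ᵥ x‖ := by
  haveI : Nonempty (Fin N) := ⟨⟨0, hN⟩⟩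
  haveI : CompleteSpace (Matrix (Fin N) (Fin N) ℂ) := FiniteDimensional.complete ℂ _
  set A : Matrix (Fin N) (Fin N) ℂ := M.map Complex.ofReal with hA
  have hA_unit : IsUnit A := by
    apply spectrum.isUnit_of_zero_notMem (R := ℂ)
    intro h0
    have := heig 0 (aux_root_of_mem_spectrum A 0 h0)
    norm_num at this
  set u : (Matrix (Fin N) (Fin N) ℂ)ˣ := hA_unit.unit with hu
  set B : Matrix (Fin N) (Fin N) ℂ := ↑u⁻¹ with hB
  have hspec : ∀ z ∈ spectrum ℂ B, ‖z‖₊ < 1 := by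
    intro z hz
    have hz0 : z ≠ 0 := by
      rintro rfl
      exact (spectrum.zero_notMem_iff ℂ).mpr (u⁻¹).isUnit hz
    have hinv : z⁻¹ ∈ spectrum ℂ (↑u : Matrix (Fin N) (Fin N) ℂ) := by
      have := (spectrum.inv_mem_iff (r := Units.mk0 z hz0) (a := u⁻¹)).mp hz
      simpa using this
    have h1 : 1 < ‖z⁻¹‖ := heig z⁻¹ (aux_root_of_mem_spectrum A z⁻¹ (by rwa [hu, IsUnit.unit_spec] at hinv))
    rw [norm_inv] at h1
    have : ‖z‖ < 1 := by
      have hzpos : 0 < ‖z‖ := norm_pos_iff.mpr hz0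
      have h2 : ‖z‖ * ‖z‖⁻¹ = 1 := mul_inv_cancel₀ (ne_of_gt hzpos)
      nlinarith
    exact_mod_cast this
  have hrad : spectralRadius ℂ B < 1 := by
    have := spectrum.spectralRadius_lt_of_forall_lt B (r := 1) hspec
    simpa using this
  have hgel := spectrum.pow_nnnorm_pow_one_div_tendsto_nhds_spectralRadius B
  have hev : ∀ᶠ n : ℕ in Filter.atTop, ((‖B ^ n‖₊ : ENNReal) ^ (1 / (n : ℝ)) < 1) :=
    hgel.eventually_lt_const hrad
  obtain ⟨n, hlt, hn1⟩ := (hev.and (Filter.eventually_ge_atTop 1)).exists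
  have hnpos : (0:ℝ) < 1 / (n:ℝ) := by
    have : (0:ℝ) < (n:ℝ) := by exact_mod_cast Nat.lt_of_lt_of_le Nat.zero_lt_one hn1
    positivity
  have hBn : ‖B ^ n‖₊ < 1 := by
    by_contra hge
    push_neg at hge
    have h1le : (1 : ENNReal) ≤ (‖B ^ n‖₊ : ENNReal) := by exact_mod_cast hge
    exact absurd hlt (not_lt.mpr (ENNReal.one_le_rpow h1le hnpos))
  have hAu : (↑u : Matrix (Fin N) (Fin N) ℂ) = A := hA_unit.unit_spec
  have h1 : B * A = 1 := by rw [hB, ← hAu]; exact u.inv_mul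
  have h2 : A * B = 1 := by rw [hB, ← hAu]; exact u.mul_inv
  have hone : B ^ n * A ^ n = 1 := by
    have hc : Commute B A := h1.trans h2.symm
    rw [← hc.mul_pow, h1, one_pow]
  have hBn0 : B ^ n ≠ 0 := by
    intro h
    rw [h, zero_mul] at hone
    have h00 : (0 : Matrix (Fin N) (Fin N) ℂ) ⟨0,hN⟩ ⟨0,hN⟩ =
        (1 : Matrix (Fin N) (Fin N) ℂ) ⟨0,hN⟩ ⟨0,hN⟩ := by rw [hone]
    simp [Matrix.one_apply] at h00
  have hpos : 0 < ‖B ^ n‖ := norm_pos_iff.mpr hBn0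
  have hlt1 : ‖B ^ n‖ < 1 := by exact_mod_cast hBn
  refine ⟨n, ‖B ^ n‖⁻¹, hn1, ?_, ?_⟩
  · rw [one_lt_inv_iff₀]
    exact ⟨hpos, hlt1⟩
  intro x
  set xc : Fin N → ℂ := fun i => (x i : ℂ) with hxc
  have hnormc : ∀ y : Fin N → ℝ, ‖(fun i => (y i : ℂ))‖ = ‖y‖ := by
    intro y
    simp [Pi.norm_def, Pi.nnnorm_def]
  have hpowA : A ^ n = (M ^ n).map Complex.ofReal := by
    have : ∀ m : ℕ, A ^ m = (M ^ m).map Complex.ofReal := by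
      intro m
      induction m with
      | zero => ext i j; by_cases hij : i = j <;> simp [hij, Matrix.one_apply]
      | succ k ih =>
          rw [pow_succ, pow_succ, ih, hA]
          ext i j
          simp [Matrix.mul_apply, Matrix.map_apply]
    exact this n
  have hmapvec : (A ^ n) *ᵥ xc = fun i => (((M ^ n) *ᵥ x) i : ℂ) := by
    ext i
    simp only [hpowA, Matrix.mulVec, dotProduct, Matrix.map_apply, hxc]
    push_cast
    rfl
  have hx1 : ‖xc‖ ≤ ‖B ^ n‖ * ‖(A ^ n) *ᵥ xc‖ := by
    have := Matrix.linfty_opNorm_mulVec (B ^ n) ((A ^ n) *ᵥ xc)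
    rwa [Matrix.mulVec_mulVec, hone, Matrix.one_mulVec] at this
  have hx2 : ‖xc‖ = ‖x‖ := hnormc x
  have hx3 : ‖(A ^ n) *ᵥ xc‖ = ‖(M ^ n) *ᵥ x‖ := by rw [hmapvec]; exact hnormc _
  rw [hx2, hx3] at hx1
  calc ‖B ^ n‖⁻¹ * ‖x‖ ≤ ‖B ^ n‖⁻¹ * (‖B ^ n‖ * ‖(M ^ n) *ᵥ x‖) :=
        mul_le_mul_of_nonneg_left hx1 (by positivity)
    _ = ‖(M ^ n) *ᵥ x‖ := by field_simp


open Matrix Asymptotics in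
/-- If `f : ℝ^N → ℝ^N` is continuous, differentiable at `0`, `f 0 = 0`, and all
complex eigenvalues of `Df(0)` have modulus `> 1`, then `0` is a local repellor:
for some norm `ν` there are `δ > 0` and `c > 1` with `ν (f x) ≥ c * ν x`
whenever `ν x < δ`, so every nonzero orbit leaves the `δ`-ball. -/
theorem stmt_14 (N : ℕ) (f : (Fin N → ℝ) → (Fin N → ℝ))
    (hcont : Continuous f) (h0 : f 0 = 0)
    (D : (Fin N → ℝ) →L[ℝ] (Fin N → ℝ)) (hD : HasFDerivAt f D 0)
    (heig : ∀ μ : ℂ,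
      ((LinearMap.toMatrix' (D : (Fin N → ℝ) →ₗ[ℝ] (Fin N → ℝ))).map
        Complex.ofReal).charpoly.IsRoot μ → 1 < ‖μ‖) :
    ∃ ν : (Fin N → ℝ) → ℝ,
      (∀ x, 0 ≤ ν x) ∧ (∀ x, ν x = 0 ↔ x = 0) ∧
      (∀ (a : ℝ) x, ν (a • x) = |a| * ν x) ∧
      (∀ x y, ν (x + y) ≤ ν x + ν y) ∧
      ∃ δ > (0:ℝ), ∃ c : ℝ, 1 < c ∧
        (∀ x, ν x < δ → c * ν x ≤ ν (f x)) ∧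
        (∀ x, x ≠ 0 → ν x < δ → ∃ n : ℕ, δ ≤ ν (f^[n] x)) := by
  rcases Nat.eq_zero_or_pos N with hN | hN
  · subst hN
    have hall : ∀ x : Fin 0 → ℝ, x = 0 := fun x => funext fun i => i.elim0
    refine ⟨fun _ => 0, fun x => le_refl 0,
      fun x => ⟨fun _ => hall x, fun _ => rfl⟩,
      fun a x => (mul_zero |a|).symm,
      fun x y => by norm_num,
      1, one_pos, 2, one_lt_two,
      fun x _ => by norm_num,
      fun x hx _ => absurd (hall x) hx⟩
  set M : Matrix (Fin N) (Fin N) ℝ :=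
    LinearMap.toMatrix' (D : (Fin N → ℝ) →ₗ[ℝ] (Fin N → ℝ)) with hM
  obtain ⟨n, K, hn1, hK, hKx⟩ := aux_expansion hN M heig
  -- D^k acts as M^k
  have hDM : ∀ x, D x = M *ᵥ x := by
    intro x
    have h1 := Matrix.toLin'_toMatrix' (D : (Fin N → ℝ) →ₗ[ℝ] (Fin N → ℝ))
    rw [← Matrix.toLin'_apply, h1]
    rfl
  have hDk : ∀ (k : ℕ) x, (D ^ k) x = (M ^ k) *ᵥ x := by
    intro k
    induction k with
    | zero => intro x; simp [Matrix.one_mulVec]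
    | succ m ih =>
        intro x
        rw [pow_succ, pow_succ, ContinuousLinearMap.mul_apply, hDM x, ih,
          Matrix.mulVec_mulVec]
  have hKD : ∀ x : Fin N → ℝ, K * ‖x‖ ≤ ‖(D ^ n) x‖ := by
    intro x; rw [hDk]; exact hKx x
  have hK0 : (0:ℝ) < K := lt_trans one_pos hK
  -- adapted norm
  set a : ℝ := K ^ ((n:ℝ)⁻¹) with ha
  have hnne : (n:ℝ) ≠ 0 := Nat.cast_ne_zero.mpr hn1.ne'
  have haK : 1 < a := by
    rw [ha]
    exact Real.one_lt_rpow_iff_of_pos hK0 |>.mpr (Or.inl ⟨hK, by positivity⟩)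
  have ha0 : (0:ℝ) < a := lt_trans one_pos haK
  have han : a ^ n = K := by
    rw [ha, ← Real.rpow_natCast (K ^ ((n:ℝ)⁻¹)) n, ← Real.rpow_mul (le_of_lt hK0),
      inv_mul_cancel₀ hnne, Real.rpow_one]
  set b : ℝ := a⁻¹ with hb
  have hb0 : (0:ℝ) < b := by positivity
  have hbnK : b ^ n * K = 1 := by
    rw [hb, inv_pow, ← han]
    field_simp
  set ν : (Fin N → ℝ) → ℝ := fun x => ∑ k ∈ Finset.range n, b ^ k * ‖(D ^ k) x‖ with hν
  have hν_nonneg : ∀ x, 0 ≤ ν x := by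
    intro x
    apply Finset.sum_nonneg
    intro k _
    positivity
  have hν_ge : ∀ x, ‖x‖ ≤ ν x := by
    intro x
    have h0mem : 0 ∈ Finset.range n := Finset.mem_range.mpr hn1
    have := Finset.single_le_sum (f := fun k => b ^ k * ‖(D ^ k) x‖)
      (fun k _ => by positivity) h0mem
    simpa [hν] using this
  have hν_zero : ∀ x, ν x = 0 ↔ x = 0 := by
    intro x
    constructor
    · intro h
      have := hν_ge x
      rw [h] at this
      exact norm_le_zero_iff.mp this
    · rintro rfl
      simp [hν]
  have hν_smul : ∀ (t : ℝ) x, ν (t • x) = |t| * ν x := by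
    intro t x
    rw [hν, Finset.mul_sum]
    apply Finset.sum_congr rfl
    intro k _
    rw [_root_.map_smul, norm_smul, Real.norm_eq_abs]
    ring
  have hν_add : ∀ x y, ν (x + y) ≤ ν x + ν y := by
    intro x y
    rw [hν, ← Finset.sum_add_distrib]
    apply Finset.sum_le_sum
    intro k _
    rw [map_add, ← mul_add]
    exact mul_le_mul_of_nonneg_left (norm_add_le _ _) (by positivity)
  -- expansion of ν under D
  have hν_exp : ∀ x, a * ν x ≤ ν (D x) := by
    intro x
    set g : ℕ → ℝ := fun k => b ^ k * ‖(D ^ k) x‖ with hg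
    have hνD : b * ν (D x) = ∑ k ∈ Finset.range n, g (k + 1) := by
      rw [hν, Finset.mul_sum]
      apply Finset.sum_congr rfl
      intro k _
      have hDkk : (D ^ (k+1)) x = (D ^ k) (D x) := by
        rw [pow_succ, ContinuousLinearMap.mul_apply]
      show b * (b ^ k * ‖(D ^ k) (D x)‖) = b ^ (k+1) * ‖(D ^ (k+1)) x‖
      rw [hDkk, pow_succ]
      ring
    have hshift : ∑ k ∈ Finset.range n, g (k + 1)
        = (∑ k ∈ Finset.range n, g k) + g n - g 0 := by
      have e1 := Finset.sum_range_succ' g n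
      have e2 := Finset.sum_range_succ g n
      rw [e2] at e1
      linarith
    have hgn : g 0 ≤ g n := by
      rw [hg]
      simp only [pow_zero, one_mul]
      have h1 : K * ‖x‖ ≤ ‖(D ^ n) x‖ := hKD x
      have h2 : b ^ n * (K * ‖x‖) ≤ b ^ n * ‖(D ^ n) x‖ :=
        mul_le_mul_of_nonneg_left h1 (by positivity)
      calc ‖(D ^ 0) x‖ = ‖x‖ := by simp
        _ = b ^ n * K * ‖x‖ := by rw [hbnK]; ring
        _ ≤ b ^ n * ‖(D ^ n) x‖ := by rw [mul_assoc]; exact h2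
    have hkey : ν x ≤ b * ν (D x) := by
      rw [hνD, hshift]
      have hgsum : ∑ k ∈ Finset.range n, g k = ν x := rfl
      linarith
    have := mul_le_mul_of_nonneg_left hkey (le_of_lt ha0)
    rw [← mul_assoc, hb, mul_inv_cancel₀ (ne_of_gt ha0), one_mul] at this
    exact this
  -- comparison with the sup norm
  set C : ℝ := ∑ k ∈ Finset.range n, b ^ k * ‖(D ^ k : (Fin N → ℝ) →L[ℝ] (Fin N → ℝ))‖ with hC
  have hν_le : ∀ x, ν x ≤ C * ‖x‖ := by
    intro x
    rw [hν, hC, Finset.sum_mul]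
    apply Finset.sum_le_sum
    intro k _
    rw [mul_assoc]
    exact mul_le_mul_of_nonneg_left (ContinuousLinearMap.le_opNorm _ _) (by positivity)
  haveI : Nontrivial (Fin N → ℝ) := by
    refine ⟨0, fun _ => 1, fun h => ?_⟩
    have := congrFun h ⟨0, hN⟩
    norm_num at this
  have hC1 : 1 ≤ C := by
    have h0mem : 0 ∈ Finset.range n := Finset.mem_range.mpr hn1
    have := Finset.single_le_sum
      (f := fun k => b ^ k * ‖(D ^ k : (Fin N → ℝ) →L[ℝ] (Fin N → ℝ))‖)
      (fun k _ => by positivity) h0mem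
    rw [hC]
    calc (1:ℝ) = b ^ 0 * ‖(D ^ 0 : (Fin N → ℝ) →L[ℝ] (Fin N → ℝ))‖ := by
          rw [pow_zero, pow_zero, one_mul]
          exact (ContinuousLinearMap.norm_id (𝕜 := ℝ) (E := Fin N → ℝ)).symm
      _ ≤ _ := this
  have hC0 : (0:ℝ) < C := lt_of_lt_of_le one_pos hC1
  -- little-o estimate
  set ε : ℝ := (a - 1) / (2 * C) with hε
  have hε0 : 0 < ε := by
    rw [hε]
    have : 0 < a - 1 := by linarith
    positivity
  have hlo : (fun x => f x - D x) =o[nhds 0] fun x : Fin N → ℝ => x := by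
    have := hD.isLittleO
    simpa [h0] using this
  have hev := hlo.def hε0
  rw [Metric.eventually_nhds_iff] at hev
  obtain ⟨δ, hδ0, hδ⟩ := hev
  set c : ℝ := (a + 1) / 2 with hc
  have hc1 : 1 < c := by rw [hc]; linarith
  have hmain : ∀ x, ν x < δ → c * ν x ≤ ν (f x) := by
    intro x hx
    have hxδ : dist x 0 < δ := by
      rw [dist_zero_right]
      exact lt_of_le_of_lt (hν_ge x) hx
    have hbound : ‖f x - D x‖ ≤ ε * ‖x‖ := by simpa using hδ hxδ
    have h1 : ν (f x - D x) ≤ C * (ε * ‖x‖) :=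
      le_trans (hν_le _) (mul_le_mul_of_nonneg_left hbound (le_of_lt hC0))
    have h2 : C * (ε * ‖x‖) ≤ (a - 1) / 2 * ν x := by
      have hxν : ‖x‖ ≤ ν x := hν_ge x
      have : C * ε = (a - 1) / 2 := by rw [hε]; field_simp
      calc C * (ε * ‖x‖) = C * ε * ‖x‖ := by ring
        _ = (a - 1) / 2 * ‖x‖ := by rw [this]
        _ ≤ (a - 1) / 2 * ν x := by
            apply mul_le_mul_of_nonneg_left hxν
            linarith
    have h3 : ν (D x) ≤ ν (f x) + ν (f x - D x) := by
      have heq : D x = f x + (-1 : ℝ) • (f x - D x) := by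
        simp only [neg_one_smul]
        abel
      calc ν (D x) = ν (f x + (-1 : ℝ) • (f x - D x)) := by rw [← heq]
        _ ≤ ν (f x) + ν ((-1 : ℝ) • (f x - D x)) := hν_add _ _
        _ = ν (f x) + ν (f x - D x) := by rw [hν_smul]; norm_num
    have h4 : a * ν x ≤ ν (D x) := hν_exp x
    have h5 : 0 ≤ ν x := hν_nonneg x
    rw [hc]
    linarith
  refine ⟨ν, hν_nonneg, hν_zero, hν_smul, hν_add, δ, hδ0, c, hc1, hmain, ?_⟩
  intro x hx hxδ
  by_contra hno
  push_neg at hno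
  have hgrow : ∀ m : ℕ, c ^ m * ν x ≤ ν (f^[m] x) := by
    intro m
    induction m with
    | zero => simp
    | succ k ih =>
        have hlt : ν (f^[k] x) < δ := hno k
        have := hmain (f^[k] x) hlt
        rw [Function.iterate_succ_apply']
        calc c ^ (k+1) * ν x = c * (c ^ k * ν x) := by ring
          _ ≤ c * ν (f^[k] x) :=
              mul_le_mul_of_nonneg_left ih (by linarith)
          _ ≤ ν (f (f^[k] x)) := this
  have hνx0 : 0 < ν x := by
    rcases lt_or_eq_of_le (hν_nonneg x) with h | h
    · exact h
    · exact absurd ((hν_zero x).mp h.symm) hx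
  obtain ⟨m, hm⟩ := pow_unbounded_of_one_lt (δ / ν x) hc1
  have : δ < c ^ m * ν x := by
    rw [div_lt_iff₀ hνx0] at hm
    linarith
  exact absurd (lt_of_le_of_lt (le_trans (le_of_lt this) (hgrow m)) (hno m)) (lt_irrefl _)
end

section
/- Let f : ℝ² → ℝ² be a continuous injective SO(2)-equivariant map with f(0) = 0, and suppose the induced radial map g : [0,∞) → [0,∞), g(‖p‖) = ‖f(p)‖, has 0 as its only fixed point and 0 is a local attractor for g. Then 0 is a global attractor for f: fⁿ(p) → 0 for every p ∈ ℝ². -/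
/-- Let `f` be a continuous injective `SO(2)`-equivariant map of the plane with
`f 0 = 0`, whose induced radial map `g` has `0` as its only fixed point on
`[0,∞)` and `0` is a local attractor for `g`. Then `0` is a global attractor
for `f`. -/
theorem stmt_16 (f : ℂ → ℂ) (hcont : Continuous f) (hinj : Function.Injective f)
    (hequiv : ∀ (θ : ℝ) (z : ℂ),
      f (Complex.exp (θ * Complex.I) * z) = Complex.exp (θ * Complex.I) * f z)
    (h0 : f 0 = 0) (g : ℝ → ℝ)
    (hg : ∀ z : ℂ, ‖f z‖ = g ‖z‖)
    (hfix : ∀ r : ℝ, 0 ≤ r → (g r = r ↔ r = 0))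
    (hloc : ∃ ε > (0:ℝ), ∀ r : ℝ, 0 ≤ r → r < ε →
      Filter.Tendsto (fun n => g^[n] r) Filter.atTop (nhds 0)) :
    ∀ z : ℂ, Filter.Tendsto (fun n => f^[n] z) Filter.atTop (nhds 0) := by
  obtain ⟨ε, hε, hloc⟩ := hloc
  have habs : ∀ r : ℝ, 0 ≤ r → g r = ‖f r‖ := by
    intro r hr
    rw [hg r, Complex.norm_of_nonneg hr]
  have hgnn : ∀ r : ℝ, 0 ≤ r → 0 ≤ g r := fun r hr =>
    (habs r hr) ▸ norm_nonneg _
  have hg0 : g 0 = 0 := by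
    have := habs 0 le_rfl
    simpa [h0] using this
  have hgc : ContinuousOn g (Set.Ici (0:ℝ)) := by
    apply ContinuousOn.congr
      (f := fun r : ℝ => ‖f (r : ℂ)‖)
    · exact (continuous_norm.comp (hcont.comp Complex.continuous_ofReal)).continuousOn
    · intro r hr; exact habs r (Set.mem_Ici.mp hr)
  -- key: g r < r for all positive r
  have key : ∀ r : ℝ, 0 < r → g r < r := by
    by_contra hcon
    push_neg at hcon
    obtain ⟨r0, hr0, hge⟩ := hcon
    have hgt : ∀ s : ℝ, 0 < s → s < g s := by
      intro s hs
      rcases lt_trichotomy (g s) s with h | h | h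
      · exfalso
        have hsub : Set.uIcc s r0 ⊆ Set.Ici (0:ℝ) := by
          intro x hx
          have h1 := hx.1
          have : (0:ℝ) < min s r0 := lt_min hs hr0
          exact Set.mem_Ici.mpr (le_trans this.le h1)
        have hφc : ContinuousOn (fun x => g x - x) (Set.uIcc s r0) :=
          (hgc.mono hsub).sub continuousOn_id
        have hr0gt : r0 < g r0 := by
          rcases eq_or_lt_of_le hge with he | hlt
          · exact absurd ((hfix r0 hr0.le).mp he.symm) hr0.ne'
          · exact hlt
        have hmem : (0:ℝ) ∈ Set.uIcc (g s - s) (g r0 - r0) := by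
          apply Set.mem_uIcc.mpr
          left
          constructor
          · linarith
          · linarith
        obtain ⟨c, hc, hc0⟩ := intermediate_value_uIcc hφc hmem
        have hcpos : 0 < c := lt_of_lt_of_le (lt_min hs hr0) hc.1
        have : g c = c := by
          simp only at hc0; linarith
        exact hcpos.ne' ((hfix c hcpos.le).mp this)
      · exact absurd ((hfix s hs.le).mp h) hs.ne'
      · exact h
    -- contradiction with local attractor
    set r1 := ε / 2 with hr1def
    have hr1 : 0 < r1 := by positivity
    have hr1ε : r1 < ε := by simp [hr1def]; linarith
    have hlb : ∀ n, r1 ≤ g^[n] r1 := by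
      intro n
      induction n with
      | zero => simp
      | succ n ih =>
        rw [Function.iterate_succ_apply']
        exact le_of_lt (lt_of_le_of_lt ih (hgt _ (lt_of_lt_of_le hr1 ih)))
    have htend := hloc r1 hr1.le hr1ε
    have : r1 ≤ 0 := ge_of_tendsto' htend hlb
    linarith
  intro z
  set a : ℕ → ℝ := fun n => g^[n] ‖z‖ with ha
  have hann : ∀ n, 0 ≤ a n := by
    intro n
    induction n with
    | zero => exact norm_nonneg z
    | succ n ih =>
      simp only [ha, Function.iterate_succ_apply']
      exact hgnn _ ih
  have hstep : ∀ n, a (n + 1) ≤ a n := by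
    intro n
    have : a (n + 1) = g (a n) := Function.iterate_succ_apply' g n _
    rw [this]
    rcases eq_or_lt_of_le (hann n) with he | hp
    · rw [← he, hg0]
    · exact (key _ hp).le
  have hanti : Antitone a := antitone_nat_of_succ_le hstep
  have hbdd : BddBelow (Set.range a) := ⟨0, fun x ⟨n, hn⟩ => hn ▸ hann n⟩
  have htend : Filter.Tendsto a Filter.atTop (nhds (⨅ n, a n)) :=
    tendsto_atTop_ciInf hanti hbdd
  set L := ⨅ n, a n with hL
  have hL0 : 0 ≤ L := le_ciInf hann
  -- L is a fixed point of g
  have hgL : g L = L := by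
    have h1 : Filter.Tendsto (fun n => a (n + 1)) Filter.atTop (nhds L) :=
      htend.comp (Filter.tendsto_add_atTop_nat 1)
    have h2 : Filter.Tendsto (fun n => g (a n)) Filter.atTop (nhds (g L)) := by
      have hcw : ContinuousWithinAt g (Set.Ici 0) L := hgc L (Set.mem_Ici.mpr hL0)
      have : Filter.Tendsto a Filter.atTop (nhdsWithin L (Set.Ici 0)) :=
        tendsto_nhdsWithin_of_tendsto_nhds_of_eventually_within a htend
          (Filter.Eventually.of_forall fun n => Set.mem_Ici.mpr (hann n))
      exact hcw.tendsto.comp this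
    have heq : (fun n => a (n + 1)) = fun n => g (a n) := by
      funext n
      exact Function.iterate_succ_apply' g n _
    rw [heq] at h1
    exact tendsto_nhds_unique h2 h1
  have hLeq : L = 0 := (hfix L hL0).mp hgL
  rw [hLeq] at htend
  -- conclude for f
  have hnorm : ∀ n, ‖f^[n] z‖ = a n := by
    intro n
    induction n with
    | zero => rfl
    | succ n ih =>
      rw [Function.iterate_succ_apply', hg, ih]
      exact (Function.iterate_succ_apply' g n _).symm
  rw [tendsto_zero_iff_norm_tendsto_zero]
  simpa only [hnorm] using htend
end

section
/- The map f(x,y) = (−a x³ + (a−1)x, −y/2) with 0 < a < 1 is equivariant under the group D₂ generated by (x,y) ↦ (−x,−y) and (x,y) ↦ (x,−y), has the origin as its unique fixed point, the eigenvalues of Df(0) have absolute value less than 1, and yet f possesses a 2-periodic orbit, namely the points (±1, 0) satisfy f(1,0) = (−1,0) and f(−1,0) = (1,0). -/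
/-- The map `f(x,y) = (-a x³ + (a-1) x, -y/2)` with `0 < a < 1` is
`D₂`-equivariant, has the origin as unique fixed point, the eigenvalues
`a - 1` and `-1/2` of its Jacobian `Df(0) = diag(a-1, -1/2)` have absolute
value `< 1`, and yet `(1,0)`, `(-1,0)` form a 2-periodic orbit. -/
theorem stmt_17 (a : ℝ) (ha0 : 0 < a) (ha1 : a < 1)
    (f : ℝ × ℝ → ℝ × ℝ)
    (hf : ∀ p : ℝ × ℝ, f p = (-a * p.1 ^ 3 + (a - 1) * p.1, -p.2 / 2)) :
    (∀ p : ℝ × ℝ, f (-p.1, -p.2) = (-(f p).1, -(f p).2)) ∧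
    (∀ p : ℝ × ℝ, f (p.1, -p.2) = ((f p).1, -(f p).2)) ∧
    (∀ p : ℝ × ℝ, f p = p ↔ p = 0) ∧
    (∃ D : ℝ × ℝ →L[ℝ] ℝ × ℝ, HasFDerivAt f D 0 ∧
      (∀ p : ℝ × ℝ, D p = ((a - 1) * p.1, -p.2 / 2)) ∧
      |a - 1| < 1 ∧ |(-1/2 : ℝ)| < 1) ∧
    f (1, 0) = (-1, 0) ∧ f (-1, 0) = (1, 0) ∧ f (1, 0) ≠ (1, 0) := by
  refine ⟨fun p => ?_, fun p => ?_, fun p => ?_, ?_, ?_, ?_, ?_⟩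
  · simp only [hf, Prod.ext_iff]; constructor <;> ring
  · simp only [hf, Prod.ext_iff]; exact ⟨trivial, by ring⟩
  · constructor
    · intro h
      rw [hf] at h
      have h1 : -a * p.1 ^ 3 + (a - 1) * p.1 = p.1 := congrArg Prod.fst h
      have h2 : -p.2 / 2 = p.2 := congrArg Prod.snd h
      have hx : p.1 * (a * p.1 ^ 2 + (2 - a)) = 0 := by linarith
      have hpos : a * p.1 ^ 2 + (2 - a) > 0 := by nlinarith [sq_nonneg p.1]
      have hx0 : p.1 = 0 := by
        rcases mul_eq_zero.1 hx with h | h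
        · exact h
        · linarith
      have hy0 : p.2 = 0 := by linarith
      exact Prod.ext hx0 hy0
    · rintro rfl; simp [hf]
  · refine ⟨((a - 1) • (ContinuousLinearMap.fst ℝ ℝ ℝ)).prod
      ((-1/2 : ℝ) • (ContinuousLinearMap.snd ℝ ℝ ℝ)), ?_, fun p => ?_, ?_, ?_⟩
    · have hfe : f = fun p : ℝ × ℝ => (-a * p.1 ^ 3 + (a - 1) * p.1, -p.2 / 2) :=
        funext hf
      rw [hfe]
      have h1 : HasFDerivAt (fun p : ℝ × ℝ => -a * p.1 ^ 3 + (a - 1) * p.1)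
          ((a - 1) • (ContinuousLinearMap.fst ℝ ℝ ℝ)) 0 := by
        have : HasDerivAt (fun x : ℝ => -a * x ^ 3 + (a - 1) * x)
            (-a * (3 * (0:ℝ) ^ 2) + (a - 1)) 0 := by
          simpa [Pi.add_def] using (((hasDerivAt_pow 3 (0:ℝ)).const_mul (-a)).add
            ((hasDerivAt_id (0:ℝ)).const_mul (a - 1)))
        have := this.hasFDerivAt.comp (0 : ℝ × ℝ) (hasFDerivAt_fst (𝕜 := ℝ) (p := (0 : ℝ × ℝ)))
        refine this.congr_fderiv ?_
        ext p <;> simp [ContinuousLinearMap.smulRight]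
      have h2 : HasFDerivAt (fun p : ℝ × ℝ => -p.2 / 2)
          ((-1/2 : ℝ) • (ContinuousLinearMap.snd ℝ ℝ ℝ)) 0 := by
        have : HasDerivAt (fun y : ℝ => -y / 2) (-1/2 : ℝ) 0 := by
          simpa using ((hasDerivAt_id (0:ℝ)).neg.div_const 2)
        have := this.hasFDerivAt.comp (0 : ℝ × ℝ) (hasFDerivAt_snd (𝕜 := ℝ) (p := (0 : ℝ × ℝ)))
        refine this.congr_fderiv ?_
        ext p <;> simp [ContinuousLinearMap.smulRight]
      exact h1.prodMk h2
    · simp [mul_comm]; ring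
    · rw [abs_lt]; constructor <;> linarith
    · rw [abs_lt]; norm_num
  · simp [hf]; ring
  · simp only [hf, Prod.ext_iff]; constructor <;> ring
  · rw [hf]
    intro h
    have h1 : -a * (1:ℝ) ^ 3 + (a - 1) * 1 = 1 := congrArg Prod.fst h
    nlinarith
end
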